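/- arXiv:math/9905147 — 2 statements merged into one kernel-verified Lean document; each statement's English description precedes it below -/
import Mathlib

section
/- If A ⊆ ℝ × ℝ does not have the Baire property and the set {x ∈ ℝ : (x, f(x)) ∈ A} has the Baire property for every Borel measurable f : ℝ → ℝ, then the indicator function χ_A : ℝ × ℝ → ℝ (equal to 1 on A and 0 off A) is Baire sup-measurable and does not have the Baire property. -/
open scoped symmDiff

/-- A set has the Baire property if it equals the symmetric difference of an
open set and a meager set. -/
def HasBaireProperty {X : Type*} [TopologicalSpace X] (S : Set X) : Prop :=
  ∃ U M : Set X, IsOpen U ∧ IsMeagre M ∧ S = U ∆ M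

/-- A function has the Baire property if the preimage of every open set has
the Baire property. -/
def BaireFunction {X Y : Type*} [TopologicalSpace X] [TopologicalSpace Y] (g : X → Y) : Prop :=
  ∀ U : Set Y, IsOpen U → HasBaireProperty (g ⁻¹' U)

/-- `F : ℝ × ℝ → ℝ` is Baire sup-measurable if for every `f : ℝ → ℝ` with the Baire
property, the function `x ↦ F (x, f x)` has the Baire property. -/
def BaireSupMeasurable (F : ℝ × ℝ → ℝ) : Prop :=
  ∀ f : ℝ → ℝ, BaireFunction f → BaireFunction (fun x => F (x, f x))

lemma hbp_iff_bms {X : Type*} [TopologicalSpace X] {S : Set X} :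
    HasBaireProperty S ↔ BaireMeasurableSet S := by
  constructor
  · rintro ⟨U, M, hU, hM, rfl⟩
    rw [Set.symmDiff_def]
    exact (hU.baireMeasurableSet.diff hM.baireMeasurableSet).union
      (hM.baireMeasurableSet.diff hU.baireMeasurableSet)
  · intro h
    obtain ⟨u, hu, hSu⟩ := h.residualEq_isOpen
    refine ⟨u, S ∆ u, hu, ?_, by rw [symmDiff_comm, symmDiff_symmDiff_cancel_right]⟩
    have : (S ∆ u)ᶜ = {x | S x = u x} := by
      ext x
      simp only [Set.mem_compl_iff, Set.mem_symmDiff, Set.mem_setOf_eq, eq_iff_iff]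
      by_cases hx : x ∈ S <;> by_cases hy : x ∈ u <;> simp_all [show ∀ y (T : Set X), y ∈ T ↔ T y from fun _ _ => Iff.rfl]
    rw [IsMeagre, this]
    exact hSu

/-- A function with the Baire property agrees with a measurable function off a meager set. -/
lemma exists_measurable_of_baireFunction {f : ℝ → ℝ} (hf : BaireFunction f) :
    ∃ g : ℝ → ℝ, Measurable g ∧ {x | f x ≠ g x}ᶜ ∈ residual ℝ := by
  classical
  set B := TopologicalSpace.countableBasis ℝ with hB
  have hBc : B.Countable := TopologicalSpace.countable_countableBasis ℝ
  have hBb := TopologicalSpace.isBasis_countableBasis ℝ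
  -- choose open V b and meagre N b for each b ∈ B
  have hch : ∀ b ∈ B, ∃ V N : Set ℝ, IsOpen V ∧ IsMeagre N ∧ f ⁻¹' b = V ∆ N := by
    intro b hb
    exact hf b (TopologicalSpace.isOpen_of_mem_countableBasis hb)
  choose! V N hVopen hNmeagre hVN using hch
  -- M : meagre set covering all the N b
  set M : Set ℝ := ⋃ b ∈ B, N b with hM
  have hMmeagre : IsMeagre M := by
    rw [IsMeagre, hM, Set.compl_iUnion₂]
    exact (countable_bInter_mem hBc).2 fun b hb => hNmeagre b hb
  obtain ⟨t, htM, htG, htd⟩ := mem_residual.1 hMmeagre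
  have htres : t ∈ residual ℝ := residual_of_dense_Gδ htG htd
  -- Borel meagre superset of M
  set M' : Set ℝ := tᶜ with hM'
  have hM'meas : MeasurableSet M' := htG.measurableSet.compl
  have hMM' : M ⊆ M' := Set.subset_compl_comm.mp (by simpa using htM)
  have key : ∀ b ∈ B, f ⁻¹' b ∩ M'ᶜ = V b ∩ M'ᶜ := by
    intro b hb
    have hd : (f ⁻¹' b) ∆ (V b) ⊆ M' := by
      rw [hVN b hb, symmDiff_comm (V b) (N b), symmDiff_symmDiff_cancel_right]
      exact (Set.subset_biUnion_of_mem hb).trans hMM'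
    ext x
    simp only [Set.mem_inter_iff, Set.mem_compl_iff, and_congr_left_iff]
    intro hx
    constructor <;> intro h
    · by_contra hv
      exact hx (hd (Or.inl ⟨h, hv⟩))
    · by_contra hv
      exact hx (hd (Or.inr ⟨h, hv⟩))
  refine ⟨fun x => if x ∈ M' then 0 else f x, ?_, ?_⟩
  · apply measurable_of_isOpen
    intro U hU
    obtain ⟨S, hSB, rfl⟩ := hBb.open_eq_sUnion hU
    have : (fun x => if x ∈ M' then 0 else f x) ⁻¹' ⋃₀ S =
        (M' ∩ (if (0 : ℝ) ∈ ⋃₀ S then Set.univ else ∅)) ∪ (⋃ b ∈ S, V b ∩ M'ᶜ) := by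
      ext x
      by_cases hx : x ∈ M' <;>
        simp only [Set.mem_preimage, hx, if_true, if_false, Set.mem_union, Set.mem_inter_iff,
          Set.mem_iUnion, Set.mem_compl_iff]
      · split_ifs with h0 <;> simp [hx, h0]
      · simp only [hx, false_and, false_or, not_false_iff, and_true, exists_prop]
        constructor
        · rintro ⟨b, hbS, hxb⟩
          exact ⟨b, hbS, ((key b (hSB hbS)).subset ⟨hxb, hx⟩).1⟩
        · rintro ⟨b, hbS, hxb⟩
          exact ⟨b, hbS, ((key b (hSB hbS)).symm.subset ⟨hxb, hx⟩).1⟩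
    rw [this]
    refine (hM'meas.inter (by split_ifs <;> simp)).union ?_
    exact MeasurableSet.biUnion (hBc.mono hSB) fun b hb =>
      ((hVopen b (hSB hb)).measurableSet).inter hM'meas.compl
  · refine Filter.mem_of_superset htres ?_
    intro x hx
    simp only [Set.mem_compl_iff, Set.mem_setOf_eq, not_not]
    have : x ∉ M' := by simp [hM', hx]
    simp [this]

lemma bms_indicator {S : Set ℝ} (hS : BaireMeasurableSet S) :
    BaireFunction (S.indicator fun _ => (1 : ℝ)) := by
  classical
  intro U hU
  rw [hbp_iff_bms]
  have : (S.indicator fun _ => (1 : ℝ)) ⁻¹' U =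
      (if (1 : ℝ) ∈ U then S else ∅) ∪ (if (0 : ℝ) ∈ U then Sᶜ else ∅) := by
    ext x
    by_cases hx : x ∈ S <;> split_ifs <;>
      simp_all [Set.indicator_apply]
  rw [this]
  split_ifs <;>
    first
      | exact hS.union hS.compl
      | exact hS.union (IsMeagre.empty.baireMeasurableSet)
      | exact IsMeagre.empty.baireMeasurableSet.union hS.compl
      | exact IsMeagre.empty.baireMeasurableSet.union IsMeagre.empty.baireMeasurableSet

theorem stmt_2 (A : Set (ℝ × ℝ)) (hA : ¬ HasBaireProperty A)
    (hsec : ∀ f : ℝ → ℝ, Measurable f → HasBaireProperty {x : ℝ | (x, f x) ∈ A}) :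
    BaireSupMeasurable (A.indicator fun _ => (1 : ℝ)) ∧
      ¬ BaireFunction (A.indicator fun _ => (1 : ℝ)) := by
  constructor
  · intro f hf
    obtain ⟨g, hg, hfg⟩ := exists_measurable_of_baireFunction hf
    have hSg : BaireMeasurableSet {x : ℝ | (x, g x) ∈ A} := hbp_iff_bms.1 (hsec g hg)
    have hSf : BaireMeasurableSet {x : ℝ | (x, f x) ∈ A} := by
      refine hSg.congr ?_
      refine Filter.mem_of_superset hfg fun x hx => ?_
      have hx' : f x = g x := not_not.mp hx
      show ((x, g x) ∈ A) = ((x, f x) ∈ A)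
      rw [hx']
    have : (fun x => (A.indicator fun _ => (1:ℝ)) (x, f x)) =
        ({x : ℝ | (x, f x) ∈ A}.indicator fun _ => (1 : ℝ)) := by
      ext x
      rfl
    rw [this]
    exact bms_indicator hSf
  · intro h
    apply hA
    have := h (Set.Ioi (1/2 : ℝ)) isOpen_Ioi
    have heq : (A.indicator fun _ => (1 : ℝ)) ⁻¹' Set.Ioi (1/2 : ℝ) = A := by
      ext p
      by_cases hp : p ∈ A <;> simp [Set.indicator_apply, hp] <;> norm_num
    rwa [heq] at this
end

section
/- Assume Hypothesis (H). Then for every set A ⊆ ℝ × ℝ such that both A and (ℝ × ℝ) ∖ A are nowhere meager in ℝ × ℝ, there exists a Borel measurable function f : ℝ → ℝ such that the set {x ∈ ℝ : (x, f(x)) ∈ A} does not have the Baire property. -/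
open scoped symmDiff

/-- A set `A` is nowhere meager in `X` if `A ∩ U` is nonmeager for every
nonempty open `U ⊆ X`. -/
def NowhereMeager {X : Type*} [TopologicalSpace X] (A : Set X) : Prop :=
  ∀ U : Set X, IsOpen U → U.Nonempty → ¬ IsMeagre (A ∩ U)

/-- Hypothesis (H): for every `A ⊆ 2^ω × 2^ω` such that both `A` and its complement
are nowhere meager, there is an autohomeomorphism `f` of the Cantor space `2^ω`
such that `{x : (x, f x) ∈ A}` does not have the Baire property. -/
def HypH : Prop :=
  ∀ A : Set ((ℕ → Bool) × (ℕ → Bool)),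
    NowhereMeager A → NowhereMeager Aᶜ →
    ∃ f : (ℕ → Bool) ≃ₜ (ℕ → Bool),
      ¬ HasBaireProperty {x : ℕ → Bool | (x, f x) ∈ A}

open Set Topology Filter



variable {X Y : Type*} [TopologicalSpace X] [TopologicalSpace Y]

lemma IsMeagre.union' {s t : Set X} (hs : IsMeagre s) (ht : IsMeagre t) :
    IsMeagre (s ∪ t) := by
  rw [IsMeagre, compl_union]; exact inter_mem hs ht

lemma hasBaireProperty_iff {S : Set X} :
    HasBaireProperty S ↔ ∃ U : Set X, IsOpen U ∧ IsMeagre (S ∆ U) := by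
  constructor
  · rintro ⟨U, M, hU, hM, rfl⟩
    exact ⟨U, hU, by rwa [symmDiff_comm, symmDiff_symmDiff_cancel_left]⟩
  · rintro ⟨U, hU, hM⟩
    exact ⟨U, S ∆ U, hU, hM, by rw [symmDiff_comm S U, symmDiff_symmDiff_cancel_left]⟩

lemma HasBaireProperty.congr' {S T : Set X} (hS : HasBaireProperty S)
    (h : IsMeagre (S ∆ T)) : HasBaireProperty T := by
  rw [hasBaireProperty_iff] at hS ⊢
  obtain ⟨U, hU, hM⟩ := hS
  refine ⟨U, hU, ?_⟩
  have : T ∆ U ⊆ (T ∆ S) ∪ (S ∆ U) := symmDiff_triangle T S U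
  exact ((show IsMeagre (T ∆ S) by rwa [symmDiff_comm] at h).union' hM).mono this

/-- push: nowhere dense in a subtype is nowhere dense in the ambient space. -/
lemma isNowhereDense_image_val {D : Set X} {F : Set ↥D}
    (hF : IsNowhereDense F) : IsNowhereDense ((↑) '' F : Set X) := by
  rw [IsNowhereDense, eq_empty_iff_forall_notMem]
  intro x hx
  set V := interior (closure ((↑) '' F : Set X)) with hV
  have hVop : IsOpen V := isOpen_interior
  have hVsub : V ⊆ closure D := by
    refine interior_subset.trans (closure_mono ?_)
    rintro y ⟨z, _, rfl⟩; exact z.2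
  -- V ∩ D is nonempty
  have hxD : x ∈ closure D := hVsub hx
  obtain ⟨d, hdV, hdD⟩ : (V ∩ D).Nonempty := by
    rw [mem_closure_iff] at hxD
    exact (hxD V hVop hx).imp (fun a ⟨h1, h2⟩ => ⟨h1, h2⟩)
  -- val ⁻¹' V is nonempty open subset of closure F in subtype
  have h1 : (Subtype.val ⁻¹' V : Set ↥D) ⊆ closure F := by
    intro z hz
    rw [closure_subtype]
    exact interior_subset hz
  have h2 : IsOpen (Subtype.val ⁻¹' V : Set ↥D) := hVop.preimage continuous_subtype_val
  have h3 : (⟨d, hdD⟩ : ↥D) ∈ interior (closure F) :=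
    interior_maximal h1 h2 hdV
  rw [hF] at h3; exact h3

lemma isMeagre_image_val {D : Set X} {F : Set ↥D}
    (hF : IsMeagre F) : IsMeagre ((↑) '' F : Set X) := by
  rw [isMeagre_iff_countable_union_isNowhereDense] at hF ⊢
  obtain ⟨S, hS, hSc, hsub⟩ := hF
  refine ⟨(fun t => (↑) '' t) '' S, ?_, hSc.image _, ?_⟩
  · rintro t ⟨t', ht', rfl⟩; exact isNowhereDense_image_val (hS t' ht')
  · rintro x ⟨z, hz, rfl⟩
    obtain ⟨t, ht, hzt⟩ := hsub hz
    exact ⟨(↑) '' t, ⟨t, ht, rfl⟩, ⟨z, hzt, rfl⟩⟩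

/-- A set `D` is "locally non-nowhere-dense": every nonempty relatively open
piece of `D` fails to be nowhere dense in `X`. -/
def LocNND (D : Set X) : Prop :=
  ∀ V : Set X, IsOpen V → (V ∩ D).Nonempty → ¬ IsNowhereDense (V ∩ D)

lemma isNowhereDense_preimage_val {D : Set X} (hD : LocNND D) {M : Set X}
    (hM : IsNowhereDense M) : IsNowhereDense (Subtype.val ⁻¹' M : Set ↥D) := by
  rw [IsNowhereDense, eq_empty_iff_forall_notMem]
  intro z hz
  have h1 : closure (Subtype.val ⁻¹' M : Set ↥D) ⊆ Subtype.val ⁻¹' (closure M) :=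
    continuous_subtype_val.closure_preimage_subset M
  obtain ⟨V, hVop, hVeq⟩ := (isOpen_induced_iff).1
    (isOpen_interior (s := closure (Subtype.val ⁻¹' M : Set ↥D)))
  have hzV : z ∈ (Subtype.val ⁻¹' V : Set ↥D) := hVeq ▸ hz
  have hne : (V ∩ D).Nonempty := ⟨z.1, hzV, z.2⟩
  have hsub : V ∩ D ⊆ closure M := by
    rintro y ⟨hyV, hyD⟩
    have : (⟨y, hyD⟩ : ↥D) ∈ Subtype.val ⁻¹' V := hyV
    rw [hVeq] at this
    exact h1 (interior_subset this)
  refine hD V hVop hne ?_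
  rw [IsNowhereDense]
  have h2 : closure (V ∩ D) ⊆ closure M := closure_minimal hsub isClosed_closure
  have h3 := interior_mono h2
  rw [hM] at h3
  exact eq_empty_of_subset_empty h3

section
variable {X Y : Type*} [TopologicalSpace X] [TopologicalSpace Y]


/-- a dense set is LocNND -/
lemma Dense.locNND {D : Set X} (hD : Dense D) : LocNND D := by
  intro V hV hne hnwd
  have h1 : V ⊆ closure (V ∩ D) := hD.open_subset_closure_inter hV
  have h2 : V ⊆ interior (closure (V ∩ D)) := interior_maximal h1 hV
  rw [hnwd] at h2
  obtain ⟨v, hv, _⟩ := hne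
  exact h2 hv

/-- a set whose closure contains a nonempty open set in which it is "dense" -/
lemma locNND_of_closure {D : Set X} {W : Set X} (hW : IsOpen W) (hDW : D ⊆ W)
    (hdense : W ⊆ closure D) : LocNND D := by
  intro V hV hne hnwd
  have h1 : V ∩ W ⊆ closure (V ∩ D) := by
    have : Dense (D ∪ Wᶜ) := by
      rw [dense_iff_closure_eq, eq_univ_iff_forall]
      intro x
      by_cases hx : x ∈ W
      · exact closure_mono subset_union_left (hdense hx)
      · exact subset_closure (Or.inr hx)
    have h2 := this.open_subset_closure_inter (hV.inter hW)
    refine h2.trans (closure_mono ?_)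
    rintro y ⟨⟨hyV, hyW⟩, hyD | hyW'⟩
    · exact ⟨hyV, hyD⟩
    · exact absurd hyW hyW'
  have h2 : V ∩ W ⊆ interior (closure (V ∩ D)) := interior_maximal h1 (hV.inter hW)
  rw [hnwd] at h2
  obtain ⟨v, hv, hvD⟩ := hne
  exact h2 ⟨hv, hDW hvD⟩


lemma IsMeagre.image_homeomorph {s : Set X} (hs : IsMeagre s) (h : X ≃ₜ Y) :
    IsMeagre (h '' s) := by
  rw [IsMeagre] at hs ⊢
  rw [← h.residual_map_eq, Filter.mem_map]
  have : ⇑h ⁻¹' (h '' s)ᶜ = sᶜ := by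
    rw [preimage_compl, h.injective.preimage_image]
  rwa [this]

end



section
variable {X Y : Type*} [TopologicalSpace X] [TopologicalSpace Y]

lemma isMeagre_preimage_val {D : Set X} (hD : LocNND D) {M : Set X}
    (hM : IsMeagre M) : IsMeagre (Subtype.val ⁻¹' M : Set ↥D) := by
  rw [isMeagre_iff_countable_union_isNowhereDense] at hM ⊢
  obtain ⟨S, hS, hSc, hsub⟩ := hM
  refine ⟨(fun t => Subtype.val ⁻¹' t) '' S, ?_, hSc.image _, ?_⟩
  · rintro t ⟨t', ht', rfl⟩; exact isNowhereDense_preimage_val hD (hS t' ht')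
  · intro z hz
    obtain ⟨t, ht, hzt⟩ := hsub hz
    exact ⟨Subtype.val ⁻¹' t, ⟨t, ht, rfl⟩, hzt⟩

/-- Pull the Baire property into a LocNND subspace. -/
lemma HasBaireProperty.preimage_val {D : Set X} (hD : LocNND D) {S : Set X}
    (hS : HasBaireProperty S) :
    HasBaireProperty (Subtype.val ⁻¹' S : Set ↥D) := by
  rw [hasBaireProperty_iff] at hS ⊢
  obtain ⟨U, hU, hM⟩ := hS
  refine ⟨Subtype.val ⁻¹' U, hU.preimage continuous_subtype_val, ?_⟩
  rw [← Set.preimage_symmDiff]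
  exact isMeagre_preimage_val hD hM

/-- Push the Baire property out of a comeager subspace. -/
lemma HasBaireProperty.image_val {D : Set X} (hDc : IsMeagre Dᶜ) {S : Set ↥D}
    (hS : HasBaireProperty S) :
    HasBaireProperty ((↑) '' S : Set X) := by
  rw [hasBaireProperty_iff] at hS ⊢
  obtain ⟨U', hU', hM⟩ := hS
  obtain ⟨U, hUop, hUeq⟩ := (isOpen_induced_iff).1 hU'
  refine ⟨U, hUop, ?_⟩
  have key : ((↑) '' S : Set X) ∆ U ⊆ ((↑) '' (S ∆ U') : Set X) ∪ Dᶜ := by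
    rintro x hx
    rcases hx with ⟨⟨z, hz, rfl⟩, hnU⟩ | ⟨hxU, hnS⟩
    · left
      refine ⟨z, ?_, rfl⟩
      have : z ∉ U' := by rw [← hUeq]; exact hnU
      exact Or.inl ⟨hz, this⟩
    · by_cases hxD : x ∈ D
      · left
        refine ⟨⟨x, hxD⟩, ?_, rfl⟩
        right
        constructor
        · rw [← hUeq]; exact hxU
        · intro hmem; exact hnS ⟨⟨x, hxD⟩, hmem, rfl⟩
      · right; exact hxD
  exact ((isMeagre_image_val hM).union' hDc).mono key

/-- Transfer the Baire property along a homeomorphism (image form). -/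
lemma HasBaireProperty.image_homeomorph {S : Set X} (hS : HasBaireProperty S)
    (h : X ≃ₜ Y) : HasBaireProperty (h '' S) := by
  rw [hasBaireProperty_iff] at hS ⊢
  obtain ⟨U, hU, hM⟩ := hS
  refine ⟨h '' U, h.isOpenMap U hU, ?_⟩
  rw [← Set.image_symmDiff h.injective]
  -- IsMeagre.image_homeomorph from part 2
  rw [IsMeagre] at hM ⊢
  rw [← h.residual_map_eq, Filter.mem_map]
  have : ⇑h ⁻¹' (⇑h '' (S ∆ U))ᶜ = (S ∆ U)ᶜ := by
    rw [Set.preimage_compl, h.injective.preimage_image]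
  rwa [this]

/-- countable sets are meagre when singletons have empty interior -/
lemma isMeagre_of_countable [T1Space X] (hX : ∀ x : X, interior ({x} : Set X) = ∅)
    {S : Set X} (hS : S.Countable) : IsMeagre S := by
  rw [isMeagre_iff_countable_union_isNowhereDense]
  refine ⟨(fun x => ({x} : Set X)) '' S, ?_, hS.image _, ?_⟩
  · rintro t ⟨x, _, rfl⟩
    rw [IsNowhereDense, closure_singleton]
    exact hX x
  · intro x hx
    exact ⟨{x}, ⟨x, hx, rfl⟩, rfl⟩

end

noncomputable section

def bterm (x : ℕ → Bool) (n : ℕ) : ℝ := if x n then ((1:ℝ)/2)^(n+1) else 0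

def bmap (x : ℕ → Bool) : ℝ := ∑' n, bterm x n

def dig (n : ℕ) (y : ℝ) : Bool := decide (⌊y * 2^(n+1)⌋ % 2 = 1)

def binv (y : ℝ) : ℕ → Bool := fun n => dig n y

def Nset : Set (ℕ → Bool) :=
  {x | (∀ k, ∃ n, k ≤ n ∧ x n = true) ∧ (∀ k, ∃ n, k ≤ n ∧ x n = false)}

lemma bterm_nonneg (x : ℕ → Bool) (n : ℕ) : 0 ≤ bterm x n := by
  unfold bterm; split <;> positivity

lemma bterm_le (x : ℕ → Bool) (n : ℕ) : bterm x n ≤ ((1:ℝ)/2)^(n+1) := by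
  unfold bterm; split
  · exact le_rfl
  · positivity

lemma summable_half_pow : Summable (fun n : ℕ => ((1:ℝ)/2)^(n+1)) := by
  simpa [pow_succ] using summable_geometric_two.mul_right (1/2 : ℝ)

lemma tsum_half_pow : (∑' n : ℕ, ((1:ℝ)/2)^(n+1)) = 1 := by
  have h := tsum_geometric_two' 1
  have : ∀ n : ℕ, ((1:ℝ)/2)^(n+1) = 1/2/2^n := by
    intro n
    rw [pow_succ, div_pow, one_pow]
    ring
  rw [tsum_congr this, h]

lemma summable_bterm (x : ℕ → Bool) : Summable (bterm x) :=
  Summable.of_nonneg_of_le (bterm_nonneg x) (bterm_le x) summable_half_pow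

lemma floor_double (y : ℝ) (k : ℕ) :
    ⌊y * 2^(k+1)⌋ = 2 * ⌊y * 2^k⌋ + (if dig k y then 1 else 0) := by
  have h2k : (0:ℝ) < 2^k := by positivity
  have hpow : (2:ℝ)^(k+1) = 2^k * 2 := pow_succ 2 k
  have h1 : (2 * ⌊y * 2^k⌋ : ℤ) ≤ ⌊y * 2^(k+1)⌋ := by
    rw [Int.le_floor]
    push_cast
    rw [hpow, ← mul_assoc]
    have := Int.floor_le (y * 2^k)
    nlinarith
  have h2 : ⌊y * 2^(k+1)⌋ < 2 * ⌊y * 2^k⌋ + 2 := by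
    rw [Int.floor_lt]
    push_cast
    rw [hpow, ← mul_assoc]
    have := Int.lt_floor_add_one (y * 2^k)
    nlinarith
  by_cases hm : ⌊y * 2^(k+1)⌋ % 2 = 1
  · have hd : dig k y = true := by simp [dig, hm]
    simp only [hd, if_pos]
    omega
  · have hd : dig k y = false := by simp [dig, hm]
    simp only [hd, Bool.false_eq_true, if_false]
    omega

lemma sum_digits (y : ℝ) (hy : y ∈ Set.Ico (0:ℝ) 1) (k : ℕ) :
    ∑ n ∈ Finset.range k, bterm (binv y) n = (⌊y * 2^k⌋ : ℝ) / 2^k := by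
  induction k with
  | zero =>
    simp only [Finset.range_zero, Finset.sum_empty, pow_zero, mul_one, div_one]
    rw [Int.floor_eq_zero_iff.2 hy]
    simp
  | succ k ih =>
    rw [Finset.sum_range_succ, ih, floor_double y k]
    have h2k : (2:ℝ)^k ≠ 0 := by positivity
    have h2k1 : (2:ℝ)^(k+1) ≠ 0 := by positivity
    unfold bterm binv
    push_cast
    by_cases hd : dig k y
    · simp only [hd, if_pos]
      rw [div_pow, one_pow]
      field_simp
      ring
    · simp only [hd]
      simp only [Bool.false_eq_true, if_false]
      field_simp
      ring

lemma bmap_binv {y : ℝ} (hy : y ∈ Set.Ico (0:ℝ) 1) : bmap (binv y) = y := by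
  have hsum := summable_bterm (binv y)
  have htend : Tendsto (fun k => (⌊y * 2^k⌋ : ℝ) / 2^k) atTop (𝓝 y) := by
    rw [tendsto_iff_dist_tendsto_zero]
    have hb : ∀ k : ℕ, dist ((⌊y * 2^k⌋ : ℝ) / 2^k) y ≤ ((1:ℝ)/2)^k := by
      intro k
      have h2k : (0:ℝ) < 2^k := by positivity
      have hle := Int.floor_le (y * 2^k)
      have hlt := Int.lt_floor_add_one (y * 2^k)
      have key : ((1:ℝ)/2)^k = ((2:ℝ)^k)⁻¹ := by rw [one_div, inv_pow]
      set a := ((⌊y * 2^k⌋ : ℤ) : ℝ) with ha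
      have g1 : a/2^k ≤ y := (div_le_iff₀ h2k).2 (by linarith)
      have g2 : y - ((2:ℝ)^k)⁻¹ ≤ a/2^k := by
        rw [le_div_iff₀ h2k]
        have hinv : ((2:ℝ)^k)⁻¹*2^k = 1 := inv_mul_cancel₀ (ne_of_gt h2k)
        nlinarith
      rw [Real.dist_eq, abs_le, key]
      constructor
      · linarith
      · have hinvnn : (0:ℝ) ≤ ((2:ℝ)^k)⁻¹ := by positivity
        linarith
    refine squeeze_zero (fun k => dist_nonneg) hb ?_
    exact tendsto_pow_atTop_nhds_zero_of_lt_one (by norm_num) (by norm_num)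
  have hts : Tendsto (fun k => ∑ n ∈ Finset.range k, bterm (binv y) n) atTop (𝓝 y) := by
    refine htend.congr ?_
    intro k
    exact (sum_digits y hy k).symm
  have : HasSum (bterm (binv y)) y := (hsum.hasSum_iff_tendsto_nat).2 hts
  exact this.tsum_eq

end


section an2
open Finset

lemma tsum_bterm_le_of_false {x : ℕ → Bool} {j : ℕ} (hj : x j = false) :
    bmap x ≤ 1 - ((1:ℝ)/2)^(j+1) := by
  have hsum := summable_bterm x
  have hsum2 : Summable (fun n : ℕ => if n = j then ((1:ℝ)/2)^(j+1) else 0) :=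
    (hasSum_ite_eq j (((1:ℝ)/2)^(j+1))).summable
  have hsub : Summable (fun n : ℕ => ((1:ℝ)/2)^(n+1) - (if n = j then ((1:ℝ)/2)^(j+1) else 0)) :=
    summable_half_pow.sub hsum2
  have hle : ∀ n, bterm x n ≤ ((1:ℝ)/2)^(n+1) - (if n = j then ((1:ℝ)/2)^(j+1) else 0) := by
    intro n
    by_cases hn : n = j
    · subst hn
      simp [bterm, hj]
    · simp only [hn, if_neg, ite_false]
      simpa using bterm_le x n
  calc bmap x ≤ ∑' n, (((1:ℝ)/2)^(n+1) - (if n = j then ((1:ℝ)/2)^(j+1) else 0)) :=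
        Summable.tsum_le_tsum hle hsum hsub
    _ = 1 - ((1:ℝ)/2)^(j+1) := by
        rw [Summable.tsum_sub summable_half_pow hsum2, tsum_half_pow, tsum_ite_eq]

lemma bmap_nonneg (x : ℕ → Bool) : 0 ≤ bmap x := tsum_nonneg (bterm_nonneg x)

lemma bmap_le_one (x : ℕ → Bool) : bmap x ≤ 1 := by
  calc bmap x ≤ ∑' n, ((1:ℝ)/2)^(n+1) := Summable.tsum_le_tsum (bterm_le x) (summable_bterm x) summable_half_pow
    _ = 1 := tsum_half_pow

lemma bmap_mem_Ioo {x : ℕ → Bool} (hx : x ∈ Nset) : bmap x ∈ Set.Ioo (0:ℝ) 1 := by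
  obtain ⟨n1, _, hn1⟩ := hx.1 0
  obtain ⟨n0, _, hn0⟩ := hx.2 0
  constructor
  · have h1 := Summable.le_tsum (summable_bterm x) n1 (fun j _ => bterm_nonneg x j)
    have h2 : (0:ℝ) < bterm x n1 := by
      simp only [bterm, hn1, if_pos]
      positivity
    exact lt_of_lt_of_le h2 h1
  · have h2 := tsum_bterm_le_of_false hn0
    have : (0:ℝ) < ((1:ℝ)/2)^(n0+1) := by positivity
    linarith

/-- The key splitting: `bmap x * 2^(k+1)` is an integer plus a tail in `[0,1)`. -/
lemma bmap_mul_eq (x : ℕ → Bool) (k : ℕ) :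
    bmap x * 2^(k+1) =
      ((∑ n ∈ Finset.range (k+1), if x n then ((2:ℤ)^(k-n)) else 0 : ℤ) : ℝ)
        + (bmap (fun n => x (n + (k+1)))) := by
  have hsum := summable_bterm x
  have hsplit : bmap x = ∑ n ∈ Finset.range (k+1), bterm x n + ∑' n, bterm x (n + (k+1)) :=
    (Summable.sum_add_tsum_nat_add (k+1) hsum).symm
  rw [hsplit, add_mul]
  congr 1
  · rw [Finset.sum_mul]
    push_cast
    refine Finset.sum_congr rfl ?_
    intro n hn
    have hnk : n ≤ k := by
      have := Finset.mem_range.1 hn; omega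
    have hpow : (2:ℝ)^(k+1) = 2^(n+1) * 2^(k-n) := by
      rw [← pow_add]
      congr 1
      omega
    by_cases hxn : x n
    · simp only [bterm, hxn, if_pos]
      rw [hpow]
      have h2 : ((1:ℝ)/2)^(n+1) = ((2:ℝ)^(n+1))⁻¹ := by rw [one_div, inv_pow]
      rw [h2, ← mul_assoc, inv_mul_cancel₀ (by positivity : ((2:ℝ)^(n+1)) ≠ 0), one_mul]
    · simp [bterm, hxn]
  · rw [← tsum_mul_right]
    unfold bmap
    refine tsum_congr ?_
    intro n
    unfold bterm
    by_cases hxn : x (n + (k+1))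
    · simp only [hxn, if_pos]
      have hpow : (2:ℝ)^(k+1) = 2^(n+k+2) * ((2:ℝ)^(n+1))⁻¹ := by
        rw [← pow_sub₀ _ (by norm_num) (by omega)]
        congr 1
        omega
      have h2 : ∀ m : ℕ, ((1:ℝ)/2)^m = ((2:ℝ)^m)⁻¹ := fun m => by rw [one_div, inv_pow]
      rw [h2, h2]
      have hnk : n + (k+1) + 1 = n+k+2 := by omega
      rw [hnk, hpow, ← mul_assoc, inv_mul_cancel₀ (by positivity : ((2:ℝ)^(n+k+2)) ≠ 0), one_mul]
    · simp [hxn]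

lemma parity_sum (x : ℕ → Bool) (k : ℕ) :
    (∑ n ∈ Finset.range (k+1), if x n then ((2:ℤ)^(k-n)) else 0) % 2
      = (if x k then 1 else 0) := by
  rw [Finset.sum_range_succ]
  have h1 : (2:ℤ) ∣ ∑ n ∈ Finset.range k, (if x n then ((2:ℤ)^(k-n)) else 0) := by
    refine Finset.dvd_sum ?_
    intro n hn
    have hnk : n < k := Finset.mem_range.1 hn
    by_cases hxn : x n
    · simp only [hxn, if_pos]
      exact dvd_pow_self 2 (by omega)
    · simp [hxn]
  obtain ⟨c, hc⟩ := h1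
  rw [hc]
  have : k - k = 0 := by omega
  rw [this, pow_zero]
  by_cases hxk : x k <;> simp [hxk] <;> omega

lemma binv_bmap {x : ℕ → Bool} (hx : x ∈ Nset) : binv (bmap x) = x := by
  funext k
  have hx' : (fun n => x (n + (k+1))) ∈ Nset := by
    constructor
    · intro m
      obtain ⟨n, hn1, hn2⟩ := hx.1 (m + (k+1))
      refine ⟨n - (k+1), by omega, ?_⟩
      show x (n - (k+1) + (k+1)) = true
      rwa [Nat.sub_add_cancel (by omega)]
    · intro m
      obtain ⟨n, hn1, hn2⟩ := hx.2 (m + (k+1))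
      refine ⟨n - (k+1), by omega, ?_⟩
      show x (n - (k+1) + (k+1)) = false
      rwa [Nat.sub_add_cancel (by omega)]
  have hT := bmap_mem_Ioo hx'
  have hkey := bmap_mul_eq x k
  have hfloor : ⌊bmap x * 2^(k+1)⌋
      = ∑ n ∈ Finset.range (k+1), if x n then ((2:ℤ)^(k-n)) else 0 := by
    rw [hkey, Int.floor_intCast_add]
    have : ⌊bmap (fun n => x (n + (k+1)))⌋ = 0 :=
      Int.floor_eq_zero_iff.2 ⟨le_of_lt hT.1, hT.2⟩
    omega
  show dig k (bmap x) = x k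
  unfold dig
  rw [hfloor, parity_sum]
  by_cases hxk : x k <;> simp [hxk]

end an2

section an3

def Iset : Set ℝ := Set.Ioo 0 1 ∩ binv ⁻¹' Nset

lemma Iset_subset_Ioo : Iset ⊆ Set.Ioo 0 1 := Set.inter_subset_left

lemma mem_Iset_of_mem_Nset {x : ℕ → Bool} (hx : x ∈ Nset) : bmap x ∈ Iset :=
  ⟨bmap_mem_Ioo hx, by rw [Set.mem_preimage, binv_bmap hx]; exact hx⟩

lemma bmap_binv_of_mem_Iset {y : ℝ} (hy : y ∈ Iset) : bmap (binv y) = y :=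
  bmap_binv ⟨le_of_lt hy.1.1, hy.1.2⟩

/-- Points of Iset are non-dyadic. -/
lemma not_dyadic_of_mem_Iset {y : ℝ} (hy : y ∈ Iset) (n : ℕ) (m : ℤ) :
    y * 2^(n+1) ≠ (m : ℝ) := by
  intro heq
  obtain ⟨j, hj1, hj2⟩ := hy.2.1 (n+2)
  -- show binv y j = false for j ≥ n+1, contradiction with hj2 : binv y j = true
  have hflr : ⌊y * 2^(j+1)⌋ = m * 2^(j-n) := by
    have hy2 : y * 2^(j+1) = (m : ℝ) * 2^(j-n) := by
      have hpow : (2:ℝ)^(j+1) = 2^(n+1) * 2^(j-n) := by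
        rw [← pow_add]; congr 1; omega
      rw [hpow, ← mul_assoc, heq]
    rw [hy2]
    rw [show ((m:ℝ) * 2^(j-n)) = ((m * 2^(j-n) : ℤ) : ℝ) by push_cast; ring]
    exact Int.floor_intCast _
  have : binv y j = false := by
    show dig j y = false
    unfold dig
    rw [hflr]
    have h2 : (m * 2^(j-n)) % 2 = 0 := by
      have : (2:ℤ) ∣ 2^(j-n) := dvd_pow_self 2 (by omega)
      obtain ⟨c, hc⟩ := this
      have h3 : m * 2^(j-n) = 2*(m*c) := by rw [hc]; ring
      rw [h3]
      omega
    simp [h2]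
  rw [hj2] at this
  simp at this
end an3

section an4
open Set

lemma continuous_bmap : Continuous bmap := by
  refine continuous_tsum (f := fun n (x : ℕ → Bool) => bterm x n) ?_ summable_half_pow ?_
  · intro n
    have h1 : Continuous (fun x : ℕ → Bool => x n) := continuous_apply n
    exact Continuous.comp
      (continuous_of_discreteTopology (f := fun b : Bool => if b = true then ((1:ℝ)/2)^(n+1) else 0)) h1
  · intro n x
    rw [Real.norm_eq_abs, abs_of_nonneg (bterm_nonneg x n)]
    exact bterm_le x n

lemma measurable_binv : Measurable binv := by
  refine measurable_pi_lambda _ ?_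
  intro n
  have h1 : Measurable (fun y : ℝ => ⌊y * 2^(n+1)⌋) :=
    (measurable_id.mul_const _).floor
  exact (Measurable.of_discrete (f := fun m : ℤ => decide (m % 2 = 1))).comp h1

lemma continuousAt_binv {y : ℝ} (hy : y ∈ Iset) : ContinuousAt binv y := by
  rw [continuousAt_pi]
  intro n
  set c := y * 2^(n+1) with hc
  have hne : ∀ m : ℤ, c ≠ (m:ℝ) := fun m => not_dyadic_of_mem_Iset hy n m
  have hlt : ((⌊c⌋ : ℝ)) < c := by
    rcases lt_or_eq_of_le (Int.floor_le c) with h | h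
    · exact h
    · exact absurd h.symm (hne ⌊c⌋)
  have hlt2 : c < (⌊c⌋ : ℝ) + 1 := Int.lt_floor_add_one c
  have h2 : (0:ℝ) < 2^(n+1) := by positivity
  set V : Set ℝ := Set.Ioo ((⌊c⌋ : ℝ) / 2^(n+1)) (((⌊c⌋ : ℝ)+1) / 2^(n+1)) with hV
  have hyV : y ∈ V := by
    constructor
    · rw [div_lt_iff₀ h2]; linarith
    · rw [lt_div_iff₀ h2]; linarith
  have hconst : ∀ z ∈ V, binv z n = binv y n := by
    intro z hz
    have hzf : ⌊z * 2^(n+1)⌋ = ⌊c⌋ := by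
      rw [Int.floor_eq_iff]
      constructor
      · have := hz.1; rw [div_lt_iff₀ h2] at this; linarith
      · have := hz.2; rw [lt_div_iff₀ h2] at this; linarith
    have hyf : ⌊y * 2^(n+1)⌋ = ⌊c⌋ := rfl
    show dig n z = dig n y
    unfold dig
    rw [hzf, ← hc, hyf]
  refine ContinuousAt.congr (continuousAt_const (y := binv y n)) ?_
  filter_upwards [isOpen_Ioo.mem_nhds hyV] with z hz
  exact (hconst z hz).symm

/-- The homeomorphism between `Nset` (as a subspace of Cantor space) and `Iset`. -/
noncomputable def bHomeo : ↥Nset ≃ₜ ↥Iset where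
  toFun x := ⟨bmap x.1, mem_Iset_of_mem_Nset x.2⟩
  invFun y := ⟨binv y.1, y.2.2⟩
  left_inv x := by
    ext1
    exact binv_bmap x.2
  right_inv y := by
    ext1
    exact bmap_binv_of_mem_Iset y.2
  continuous_toFun := by
    exact Continuous.subtype_mk (continuous_bmap.comp continuous_subtype_val) _
  continuous_invFun := by
    refine Continuous.subtype_mk ?_ _
    show Continuous (Iset.restrict binv)
    refine continuousOn_iff_continuous_domRestrict.1 ?_
    intro y hy
    exact (continuousAt_binv hy).continuousWithinAt

lemma dense_Nset : Dense Nset := by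
  rw [dense_iff_inter_open]
  rintro U hU ⟨x, hx⟩
  obtain ⟨I, u, hIu, hsub⟩ := isOpen_pi_iff.1 hU x hx
  set m := I.sup id with hm
  set y : ℕ → Bool := fun n => if n ∈ I then x n else decide (n % 2 = 0) with hy
  refine ⟨y, hsub ?_, ?_, ?_⟩
  · intro i hi
    have hiI : i ∈ I := hi
    simp only [hy, hiI, if_true]
    exact (hIu i hiI).2
  · intro k
    refine ⟨2*(k+m+1), by omega, ?_⟩
    have hni : 2*(k+m+1) ∉ I := by
      intro hmem
      have : 2*(k+m+1) ≤ m := Finset.le_sup (f := id) hmem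
      omega
    have hmod : (2*(k+m+1)) % 2 = 0 := by omega
    simp [hy, hni, hmod]
  · intro k
    refine ⟨2*(k+m+1)+1, by omega, ?_⟩
    have hni : 2*(k+m+1)+1 ∉ I := by
      intro hmem
      have : 2*(k+m+1)+1 ≤ m := Finset.le_sup (f := id) hmem
      omega
    have hmod : (2*(k+m+1)+1) % 2 = 1 := by omega
    simp [hy, hni, hmod]

lemma countable_compl_Nset : Set.Countable Nsetᶜ := by
  have h1 : Nsetᶜ ⊆ (⋃ k, {x : ℕ → Bool | ∀ n, k ≤ n → x n = false})
      ∪ (⋃ k, {x : ℕ → Bool | ∀ n, k ≤ n → x n = true}) := by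
    intro x hx
    rw [Set.mem_compl_iff] at hx
    unfold Nset at hx
    rw [Set.mem_setOf_eq] at hx
    push_neg at hx
    by_cases h : ∀ k, ∃ n, k ≤ n ∧ x n = true
    · obtain ⟨k, hk⟩ := hx h
      right
      refine Set.mem_iUnion.2 ⟨k, ?_⟩
      intro n hn
      rcases Bool.eq_false_or_eq_true (x n) with h' | h'
      · exact h'
      · exact absurd h' (hk n hn)
    · push_neg at h
      obtain ⟨k, hk⟩ := h
      left
      refine Set.mem_iUnion.2 ⟨k, ?_⟩
      intro n hn
      rcases Bool.eq_false_or_eq_true (x n) with h' | h'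
      · exact absurd h' (hk n hn)
      · exact h'
  refine Set.Countable.mono h1 ?_
  have key : ∀ (b : Bool), Set.Countable (⋃ k, {x : ℕ → Bool | ∀ n, k ≤ n → x n = b}) := by
    intro b
    refine Set.countable_iUnion ?_
    intro k
    refine Set.Countable.mono (Set.Subset.refl _) (Set.Finite.countable ?_)
    have : Set.InjOn (fun x : ℕ → Bool => (fun i : Fin k => x i.1)) {x | ∀ n, k ≤ n → x n = b} := by
      intro x hx y hy hxy
      funext n
      by_cases hn : n < k
      · exact congrFun hxy ⟨n, hn⟩
      · rw [hx n (by omega), hy n (by omega)]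
    exact Set.Finite.of_finite_image (Set.toFinite _) this
  exact ((key false).union (key true))

lemma countable_Ioo_diff_Iset : Set.Countable (Set.Ioo (0:ℝ) 1 \ Iset) := by
  have h1 : Set.Ioo (0:ℝ) 1 \ Iset ⊆ bmap '' Nsetᶜ := by
    rintro y ⟨hy1, hy2⟩
    have hbinv : bmap (binv y) = y := bmap_binv ⟨le_of_lt hy1.1, hy1.2⟩
    have : binv y ∉ Nset := by
      intro hN
      exact hy2 ⟨hy1, hN⟩
    exact ⟨binv y, this, hbinv⟩
  exact (countable_compl_Nset.image bmap).mono h1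

lemma interior_singleton_cantor (x : ℕ → Bool) : interior ({x} : Set (ℕ → Bool)) = ∅ := by
  rw [eq_empty_iff_forall_notMem]
  intro z hz
  have hzx : z = x := Set.mem_singleton_iff.1 (interior_subset hz)
  subst hzx
  obtain ⟨I, u, hIu, hsub⟩ := isOpen_pi_iff.1 isOpen_interior z hz
  set m := I.sup id with hm
  set y : ℕ → Bool := fun n => if n ∈ I then z n else !(z n) with hy
  have hyI : y ∈ interior ({z} : Set (ℕ → Bool)) := by
    refine hsub ?_
    intro i hi
    have hiI : i ∈ I := hi
    simp only [hy, hiI, if_true]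
    exact (hIu i hiI).2
  have : y = z := Set.mem_singleton_iff.1 (interior_subset hyI)
  have hne : y (m+1) ≠ z (m+1) := by
    have hni : m+1 ∉ I := by
      intro hmem
      have : m+1 ≤ m := Finset.le_sup (f := id) hmem
      omega
    simp [hy, hni]
  exact hne (congrFun this (m+1))

end an4


section main

/-- Preimage of a set with BP under a homeomorphism has BP. -/
lemma HasBaireProperty.preimage_homeomorph {X Y : Type*} [TopologicalSpace X]
    [TopologicalSpace Y] {S : Set Y} (hS : HasBaireProperty S) (h : X ≃ₜ Y) :
    HasBaireProperty (⇑h ⁻¹' S) := by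
  have h1 := hS.image_homeomorph h.symm
  have h2 : ⇑h.symm '' S = ⇑h ⁻¹' S := by
    ext x
    constructor
    · rintro ⟨y, hy, rfl⟩
      simpa using hy
    · intro hx
      exact ⟨h x, hx, h.symm_apply_apply x⟩
  rwa [h2] at h1

noncomputable def bb : (ℕ → Bool) × (ℕ → Bool) → ℝ × ℝ := fun p => (bmap p.1, bmap p.2)

def N2 : Set ((ℕ → Bool) × (ℕ → Bool)) := Nset ×ˢ Nset
def I2 : Set (ℝ × ℝ) := Iset ×ˢ Iset

noncomputable def e2 : ↥N2 ≃ₜ ↥I2 :=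
  (Homeomorph.Set.prod Nset Nset).trans
    ((bHomeo.prodCongr bHomeo).trans (Homeomorph.Set.prod Iset Iset).symm)

lemma e2_val (z : ↥N2) : ((e2 z : ↥I2) : ℝ × ℝ) = bb (z : (ℕ → Bool) × (ℕ → Bool)) := rfl

lemma meagre_compl_Nset : IsMeagre (Nsetᶜ) :=
  isMeagre_of_countable interior_singleton_cantor countable_compl_Nset

lemma interior_singleton_real (x : ℝ) : interior ({x} : Set ℝ) = ∅ := by
  rw [interior_eq_empty_iff_dense_compl]; exact dense_compl_singleton x

lemma meagre_Ioo_diff_Iset : IsMeagre (Set.Ioo (0:ℝ) 1 \ Iset) :=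
  isMeagre_of_countable interior_singleton_real countable_Ioo_diff_Iset

lemma locNND_Iset : LocNND Iset := by
  refine locNND_of_closure isOpen_Ioo Iset_subset_Ioo ?_
  have hd : Dense ((Set.Ioo (0:ℝ) 1 \ Iset)ᶜ) := dense_of_mem_residual meagre_Ioo_diff_Iset
  have h1 := hd.open_subset_closure_inter (isOpen_Ioo (a := (0:ℝ)) (b := 1))
  refine h1.trans (closure_mono ?_)
  rintro y ⟨hy1, hy2⟩
  rw [Set.mem_compl_iff, Set.mem_diff] at hy2
  push_neg at hy2
  exact hy2 hy1

lemma locNND_N2 : LocNND N2 := (dense_Nset.prod dense_Nset).locNND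

/-- vertical and horizontal "lines over countable sets" are meagre in the plane -/
lemma meagre_prod_countable {E : Set ℝ} (hE : Set.Countable E) :
    IsMeagre (E ×ˢ (Set.univ : Set ℝ)) := by
  rw [isMeagre_iff_countable_union_isNowhereDense]
  refine ⟨(fun e => ({e} : Set ℝ) ×ˢ (Set.univ : Set ℝ)) '' E, ?_, hE.image _, ?_⟩
  · rintro t ⟨e, _, rfl⟩
    have hcl : IsClosed (({e} : Set ℝ) ×ˢ (Set.univ : Set ℝ)) :=
      isClosed_singleton.prod isClosed_univ
    rw [hcl.isNowhereDense_iff, eq_empty_iff_forall_notMem]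
    rintro ⟨a, b⟩ hab
    have hcont : Continuous (fun t : ℝ => (t, b)) := continuous_id.prodMk continuous_const
    have hopen : IsOpen ((fun t : ℝ => (t, b)) ⁻¹' interior (({e} : Set ℝ) ×ˢ (Set.univ : Set ℝ))) :=
      isOpen_interior.preimage hcont
    have hsub : ((fun t : ℝ => (t, b)) ⁻¹' interior (({e} : Set ℝ) ×ˢ (Set.univ : Set ℝ)))
        ⊆ {e} := by
      intro t ht
      have := interior_subset ht
      exact this.1
    have hmem : a ∈ (fun t : ℝ => (t, b)) ⁻¹' interior (({e} : Set ℝ) ×ˢ (Set.univ : Set ℝ)) := by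
      have : (a, b) ∈ interior (({e} : Set ℝ) ×ˢ (Set.univ : Set ℝ)) := hab
      exact this
    have := interior_maximal hsub hopen hmem
    rw [interior_singleton_real] at this
    exact this
  · rintro ⟨a, b⟩ ⟨ha, _⟩
    exact ⟨({a} : Set ℝ) ×ˢ Set.univ, ⟨a, ha, rfl⟩, rfl, Set.mem_univ b⟩

lemma meagre_countable_prod {E : Set ℝ} (hE : Set.Countable E) :
    IsMeagre ((Set.univ : Set ℝ) ×ˢ E) := by
  rw [isMeagre_iff_countable_union_isNowhereDense]
  refine ⟨(fun e => (Set.univ : Set ℝ) ×ˢ ({e} : Set ℝ)) '' E, ?_, hE.image _, ?_⟩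
  · rintro t ⟨e, _, rfl⟩
    have hcl : IsClosed ((Set.univ : Set ℝ) ×ˢ ({e} : Set ℝ)) :=
      isClosed_univ.prod isClosed_singleton
    rw [hcl.isNowhereDense_iff, eq_empty_iff_forall_notMem]
    rintro ⟨a, b⟩ hab
    have hcont : Continuous (fun t : ℝ => (a, t)) := continuous_const.prodMk continuous_id
    have hopen : IsOpen ((fun t : ℝ => (a, t)) ⁻¹' interior ((Set.univ : Set ℝ) ×ˢ ({e} : Set ℝ))) :=
      isOpen_interior.preimage hcont
    have hsub : ((fun t : ℝ => (a, t)) ⁻¹' interior ((Set.univ : Set ℝ) ×ˢ ({e} : Set ℝ)))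
        ⊆ {e} := by
      intro t ht
      exact (interior_subset ht).2
    have hmem : b ∈ (fun t : ℝ => (a, t)) ⁻¹' interior ((Set.univ : Set ℝ) ×ˢ ({e} : Set ℝ)) := hab
    have := interior_maximal hsub hopen hmem
    rw [interior_singleton_real] at this
    exact this
  · rintro ⟨a, b⟩ ⟨_, hb⟩
    exact ⟨(Set.univ : Set ℝ) ×ˢ ({b} : Set ℝ), ⟨b, hb, rfl⟩, Set.mem_univ a, rfl⟩

lemma meagre_Ioo2_diff_I2 :
    IsMeagre ((Set.Ioo (0:ℝ) 1 ×ˢ Set.Ioo (0:ℝ) 1) \ I2) := by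
  set E := Set.Ioo (0:ℝ) 1 \ Iset
  have hsub : (Set.Ioo (0:ℝ) 1 ×ˢ Set.Ioo (0:ℝ) 1) \ I2
      ⊆ (E ×ˢ (Set.univ : Set ℝ)) ∪ ((Set.univ : Set ℝ) ×ˢ E) := by
    rintro ⟨a, b⟩ ⟨⟨ha, hb⟩, hni⟩
    rw [I2, Set.mem_prod] at hni
    push_neg at hni
    by_cases haI : a ∈ Iset
    · right
      exact ⟨Set.mem_univ a, hb, hni haI⟩
    · left
      exact ⟨⟨ha, haI⟩, Set.mem_univ b⟩
  exact ((meagre_prod_countable countable_Ioo_diff_Iset).union'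
    (meagre_countable_prod countable_Ioo_diff_Iset)).mono hsub

/-- Transfer of nowhere-meagerness from the plane to the Cantor square. -/
lemma nowhereMeager_pullback {A' : Set (ℝ × ℝ)} (hA' : NowhereMeager A') :
    NowhereMeager (bb ⁻¹' A') := by
  intro U hU hUne hMeag
  -- pull into the dense subset N2
  have hF : IsMeagre (Subtype.val ⁻¹' (bb ⁻¹' A' ∩ U) : Set ↥N2) :=
    isMeagre_preimage_val locNND_N2 hMeag
  have hG : IsMeagre (⇑e2 '' (Subtype.val ⁻¹' (bb ⁻¹' A' ∩ U)) : Set ↥I2) :=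
    hF.image_homeomorph e2
  have hvalG : IsMeagre ((↑) '' (⇑e2 '' (Subtype.val ⁻¹' (bb ⁻¹' A' ∩ U))) : Set (ℝ × ℝ)) :=
    isMeagre_image_val hG
  -- the open set W
  have hO : IsOpen (⇑e2 '' (Subtype.val ⁻¹' U) : Set ↥I2) :=
    (Homeomorph.isOpenMap e2) _ (hU.preimage continuous_subtype_val)
  obtain ⟨W, hWop, hWeq⟩ := isOpen_induced_iff.1 hO
  set W0 := W ∩ (Set.Ioo (0:ℝ) 1 ×ˢ Set.Ioo (0:ℝ) 1) with hW0
  have hW0op : IsOpen W0 := hWop.inter (isOpen_Ioo.prod isOpen_Ioo)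
  -- W0 is nonempty
  obtain ⟨p0, hp0U, hp0N⟩ : (U ∩ N2).Nonempty :=
    (dense_iff_inter_open.1 (dense_Nset.prod dense_Nset)) U hU hUne
  have hW0ne : W0.Nonempty := by
    have hz : (⟨p0, hp0N⟩ : ↥N2) ∈ Subtype.val ⁻¹' U := hp0U
    have h2 : e2 ⟨p0, hp0N⟩ ∈ (Subtype.val ⁻¹' W : Set ↥I2) := by
      rw [hWeq]
      exact ⟨⟨p0, hp0N⟩, hz, rfl⟩
    refine ⟨(e2 ⟨p0, hp0N⟩ : ↥I2), h2, ?_⟩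
    have := (e2 ⟨p0, hp0N⟩).2
    exact ⟨Iset_subset_Ioo this.1, Iset_subset_Ioo this.2⟩
  -- A' ∩ W0 is meagre: contradiction
  refine hA' W0 hW0op hW0ne ?_
  have hsub : A' ∩ W0 ⊆ ((↑) '' (⇑e2 '' (Subtype.val ⁻¹' (bb ⁻¹' A' ∩ U))) : Set (ℝ × ℝ))
      ∪ ((Set.Ioo (0:ℝ) 1 ×ˢ Set.Ioo (0:ℝ) 1) \ I2) := by
    rintro q ⟨hqA, hqW, hqIoo⟩
    by_cases hqI : q ∈ I2
    · left
      have hq2 : (⟨q, hqI⟩ : ↥I2) ∈ (Subtype.val ⁻¹' W : Set ↥I2) := hqW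
      rw [hWeq] at hq2
      obtain ⟨z, hzU, hzq⟩ := hq2
      have hzval : bb (z : (ℕ → Bool) × (ℕ → Bool)) = q := by
        rw [← e2_val z, hzq]
      refine ⟨(⟨q, hqI⟩ : ↥I2), ⟨z, ⟨?_, hzU⟩, hzq⟩, rfl⟩
      show (z : (ℕ → Bool) × (ℕ → Bool)) ∈ bb ⁻¹' A'
      rw [Set.mem_preimage, hzval]
      exact hqA
    · right
      exact ⟨hqIoo, hqI⟩
  exact (hvalG.union' meagre_Ioo2_diff_I2).mono hsub

end main

theorem stmt_5 (hH : HypH) (A : Set (ℝ × ℝ))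
    (h1 : NowhereMeager A) (h2 : NowhereMeager Aᶜ) :
    ∃ f : ℝ → ℝ, Measurable f ∧ ¬ HasBaireProperty {x : ℝ | (x, f x) ∈ A} := by
  set B : Set ((ℕ → Bool) × (ℕ → Bool)) := bb ⁻¹' A with hB
  have hB1 : NowhereMeager B := nowhereMeager_pullback h1
  have hB2 : NowhereMeager Bᶜ := by
    have : Bᶜ = bb ⁻¹' Aᶜ := by rw [hB, Set.preimage_compl]
    rw [this]
    exact nowhereMeager_pullback h2
  obtain ⟨f, hf⟩ := hH B hB1 hB2
  set g : ℝ → ℝ := fun y => bmap (f (binv y)) with hg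
  have hgm : Measurable g :=
    continuous_bmap.measurable.comp (f.continuous.measurable.comp measurable_binv)
  refine ⟨g, hgm, ?_⟩
  intro hS
  set S : Set ℝ := {y : ℝ | (y, g y) ∈ A} with hSdef
  set T : Set (ℕ → Bool) := {x : ℕ → Bool | (x, f x) ∈ B} with hTdef
  apply hf
  -- Step 1: pull S into Iset
  have hS1 : HasBaireProperty (Subtype.val ⁻¹' S : Set ↥Iset) :=
    HasBaireProperty.preimage_val locNND_Iset hS
  -- Step 2: pull through the homeomorphism bHomeo
  have hS2 : HasBaireProperty (⇑bHomeo ⁻¹' (Subtype.val ⁻¹' S) : Set ↥Nset) :=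
    hS1.preimage_homeomorph bHomeo
  -- Step 3: identify with trace of T
  have hkey : (Subtype.val ⁻¹' T : Set ↥Nset) = ⇑bHomeo ⁻¹' (Subtype.val ⁻¹' S) := by
    ext x
    have hgb : g (bmap (x : ℕ → Bool)) = bmap (f (x : ℕ → Bool)) := by
      rw [hg]
      simp only []
      rw [binv_bmap x.2]
    show ((x : ℕ → Bool), f (x : ℕ → Bool)) ∈ B ↔ (bHomeo x : ↥Iset) ∈ (Subtype.val ⁻¹' S)
    have hBval : (((x : ℕ → Bool), f (x : ℕ → Bool)) ∈ B)
        ↔ (bmap (x : ℕ → Bool), bmap (f (x : ℕ → Bool))) ∈ A := Iff.rfl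
    have hSval : ((bHomeo x : ↥Iset) ∈ (Subtype.val ⁻¹' S))
        ↔ (bmap (x : ℕ → Bool), g (bmap (x : ℕ → Bool))) ∈ A := Iff.rfl
    rw [hBval, hSval, hgb]
  rw [← hkey] at hS2
  -- Step 4: push out of Nset
  have hS3 : HasBaireProperty ((↑) '' (Subtype.val ⁻¹' T : Set ↥Nset) : Set (ℕ → Bool)) :=
    hS2.image_val meagre_compl_Nset
  rw [Subtype.image_preimage_coe] at hS3
  -- Step 5: T differs from T ∩ Nset by a meagre set
  refine hS3.congr' ?_
  have hsub : (Nset ∩ T) ∆ T ⊆ Nsetᶜ := by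
    rw [Set.symmDiff_def]
    rintro z (⟨⟨_, hzT⟩, hzn⟩ | ⟨hzT, hzn⟩)
    · exact absurd hzT hzn
    · intro hzN
      exact hzn ⟨hzN, hzT⟩
  exact meagre_compl_Nset.mono hsub
end
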